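/- If ⟨−⟩ : C → O is a balanced contraction on a balanced braided monoidal category C, then ⟨θ_{X⊗Y}⟩ = id_{⟨X,Y⟩} for all objects X, Y, and in particular ⟨θ_X⟩ = id_{⟨X⟩} for all X. -/

import Mathlib

open CategoryTheory MonoidalCategory

universe u v w x

variable (C : Type u) [Category.{v} C] [MonoidalCategory C] [BraidedCategory C]

/-- A balanced structure on a braided monoidal category: a natural family of
automorphisms `θ_X` with `θ_{X⊗Y} = (θ_X ⊗ θ_Y) β_{Y,X} β_{X,Y}`. -/
structure Balance where
  θ : ∀ X : C, X ≅ X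
  natural : ∀ {X Y : C} (f : X ⟶ Y), f ≫ (θ Y).hom = (θ X).hom ≫ f
  tensor : ∀ X Y : C,
    (θ (X ⊗ Y)).hom = (β_ X Y).hom ≫ (β_ Y X).hom ≫ ((θ X).hom ⊗ₘ (θ Y).hom)

variable {C} {O : Type w} [Category.{x} O]

/-- A (balanced) contraction on a balanced braided monoidal category: a functor
`⟨-⟩ : C ⥤ O` with `⟨Y⊗X⟩ = ⟨X⊗Y⟩`, `⟨(θ_Y ⊗ id_X) β_{X,Y}⟩ = id`,
`⟨(X⊗Y)⊗Z⟩ = ⟨X⊗(Y⊗Z)⟩` and `⟨a_{X,Y,Z}⟩ = id`. -/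
structure IsBalancedContraction (bal : Balance C) (F : C ⥤ O) : Prop where
  obj_swap : ∀ X Y : C, F.obj (X ⊗ Y) = F.obj (Y ⊗ X)
  map_braid : ∀ X Y : C,
    F.map ((β_ X Y).hom ≫ ((bal.θ Y).hom ⊗ₘ 𝟙 X)) = eqToHom (obj_swap X Y)
  obj_assoc : ∀ X Y Z : C, F.obj ((X ⊗ Y) ⊗ Z) = F.obj (X ⊗ (Y ⊗ Z))
  map_assoc : ∀ X Y Z : C, F.map (α_ X Y Z).hom = eqToHom (obj_assoc X Y Z)

/-- A balanced contraction kills the balance: `⟨θ_{X⊗Y}⟩ = id_{⟨X,Y⟩}` for all `X, Y`,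
and in particular `⟨θ_X⟩ = id_{⟨X⟩}` for all `X`. -/
theorem balancedContraction_theta (bal : Balance C) (F : C ⥤ O)
    (hF : IsBalancedContraction bal F) :
    (∀ X Y : C, F.map (bal.θ (X ⊗ Y)).hom = 𝟙 (F.obj (X ⊗ Y))) ∧
    (∀ X : C, F.map (bal.θ X).hom = 𝟙 (F.obj X)) := by
  have key : ∀ X Y : C, F.map (bal.θ (X ⊗ Y)).hom = 𝟙 (F.obj (X ⊗ Y)) := by
    intro X Y
    have hθ : (bal.θ (X ⊗ Y)).hom =
        ((β_ X Y).hom ≫ ((bal.θ Y).hom ⊗ₘ 𝟙 X)) ≫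
          ((β_ Y X).hom ≫ ((bal.θ X).hom ⊗ₘ 𝟙 Y)) := by
      rw [bal.tensor]
      calc (β_ X Y).hom ≫ (β_ Y X).hom ≫ ((bal.θ X).hom ⊗ₘ (bal.θ Y).hom)
          = (β_ X Y).hom ≫ (β_ Y X).hom ≫ ((bal.θ X).hom ⊗ₘ 𝟙 Y) ≫
              (𝟙 X ⊗ₘ (bal.θ Y).hom) := by
            rw [tensorHom_comp_tensorHom]; simp
        _ = (β_ X Y).hom ≫ ((𝟙 Y ⊗ₘ (bal.θ X).hom) ≫ (β_ Y X).hom) ≫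
              (𝟙 X ⊗ₘ (bal.θ Y).hom) := by
            rw [BraidedCategory.braiding_naturality]; simp
        _ = (β_ X Y).hom ≫ (𝟙 Y ⊗ₘ (bal.θ X).hom) ≫ ((bal.θ Y).hom ⊗ₘ 𝟙 X) ≫
              (β_ Y X).hom := by
            simp only [Category.assoc]
            rw [← BraidedCategory.braiding_naturality]
        _ = (β_ X Y).hom ≫ ((bal.θ Y).hom ⊗ₘ 𝟙 X) ≫ (𝟙 Y ⊗ₘ (bal.θ X).hom) ≫
              (β_ Y X).hom := by
            rw [← Category.assoc ((bal.θ Y).hom ⊗ₘ 𝟙 X),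
              ← Category.assoc (𝟙 Y ⊗ₘ (bal.θ X).hom),
              id_tensor_comp_tensor_id, tensor_id_comp_id_tensor]
        _ = ((β_ X Y).hom ≫ ((bal.θ Y).hom ⊗ₘ 𝟙 X)) ≫
              ((β_ Y X).hom ≫ ((bal.θ X).hom ⊗ₘ 𝟙 Y)) := by
            rw [BraidedCategory.braiding_naturality]; simp
    rw [hθ, F.map_comp, hF.map_braid, hF.map_braid, eqToHom_trans, eqToHom_refl]
  refine ⟨key, fun X => ?_⟩
  have hnat := bal.natural (ρ_ X).hom
  have : F.map (ρ_ X).hom ≫ F.map (bal.θ X).hom =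
      F.map (bal.θ (X ⊗ 𝟙_ C)).hom ≫ F.map (ρ_ X).hom := by
    rw [← F.map_comp, ← F.map_comp, hnat]
  rw [key] at this
  simp only [Category.id_comp] at this
  have hiso : IsIso (F.map (ρ_ X).hom) := inferInstance
  exact (cancel_epi (F.map (ρ_ X).hom)).mp (by simpa using this)
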